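/- On ℝ², the minimal sphere covering number satisfies c(2, ‖·‖_1) = 2 for the ℓ^1-norm, and c(2, ‖·‖_r) = 3 for every ℓ^r-norm with 1 < r < ∞. That is: for the ℓ^1-norm there exist 2 points on the unit sphere whose closed unit balls cover the unit sphere; for each r ∈ (1, ∞) there exist 3 points on the ℓ^r-unit sphere whose closed unit balls cover the ℓ^r-unit sphere, but no 2 points on the ℓ^r-unit sphere have this property. -/

import Mathlib

open scoped BigOperators
open scoped NNReal

/-- The `ℓ^r`-norm on `ℝ^d`: `‖x‖_r = (∑ i, |x i| ^ r) ^ (1/r)`. -/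
noncomputable def lrNorm (d : ℕ) (r : ℝ) (x : Fin d → ℝ) : ℝ :=
  (∑ i, |x i| ^ r) ^ (1 / r)

/-- The minimal sphere covering number of `ℝ^d` for the norm `nrm`: the smallest `k` such that
there exist `k` points on the unit sphere whose closed unit balls cover the unit sphere. -/
noncomputable def coverNum (d : ℕ) (nrm : (Fin d → ℝ) → ℝ) : ℕ :=
  sInf {k | ∃ a : Fin k → Fin d → ℝ, (∀ i, nrm (a i) = 1) ∧
    ∀ x, nrm x = 1 → ∃ i, nrm (x - a i) ≤ 1}

/-- on `ℝ²`, the minimal sphere covering number is `2` for the `ℓ¹`-norm and `3`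
for every `ℓ^r`-norm with `1 < r < ∞`. -/
lemma lr2 (r : ℝ) (x : Fin 2 → ℝ) : lrNorm 2 r x = (|x 0| ^ r + |x 1| ^ r) ^ (1/r) := by
  simp [lrNorm, Fin.sum_univ_two]

lemma rpow_inv_key' {r S : ℝ} (hr : 0 < r) (hS : 0 ≤ S) : (S ^ r) ^ (1/r) = S := by
  rw [← Real.rpow_mul hS, mul_one_div, div_self hr.ne', Real.rpow_one]

lemma rpow_inv_key {r S : ℝ} (hr : 0 < r) (hS : 0 ≤ S) : (S ^ (1/r)) ^ r = S := by
  rw [← Real.rpow_mul hS, one_div, inv_mul_cancel₀ hr.ne', Real.rpow_one]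

noncomputable def Nrm (r θ : ℝ) : ℝ := (|Real.cos θ| ^ r + |Real.sin θ| ^ r) ^ (1/r)

noncomputable def Pt (r θ : ℝ) : Fin 2 → ℝ := ![Real.cos θ / Nrm r θ, Real.sin θ / Nrm r θ]

lemma S_pos {r : ℝ} (hr : 0 < r) (θ : ℝ) : 0 < |Real.cos θ| ^ r + |Real.sin θ| ^ r := by
  by_cases h : Real.cos θ = 0
  · have hs2 : Real.sin θ ^ 2 = 1 := by
      have := Real.sin_sq_add_cos_sq θ; rw [h] at this; nlinarith
    have hs : Real.sin θ ≠ 0 := by intro h'; rw [h'] at hs2; norm_num at hs2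
    have h1 : (0:ℝ) < |Real.sin θ| ^ r := Real.rpow_pos_of_pos (abs_pos.2 hs) r
    have h2 : (0:ℝ) ≤ |Real.cos θ| ^ r := Real.rpow_nonneg (abs_nonneg _) r
    linarith
  · have h1 : (0:ℝ) < |Real.cos θ| ^ r := Real.rpow_pos_of_pos (abs_pos.2 h) r
    have h2 : (0:ℝ) ≤ |Real.sin θ| ^ r := Real.rpow_nonneg (abs_nonneg _) r
    linarith

lemma Nrm_pos {r : ℝ} (hr : 0 < r) (θ : ℝ) : 0 < Nrm r θ :=
  Real.rpow_pos_of_pos (S_pos hr θ) _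

lemma Nrm_rpow {r : ℝ} (hr : 0 < r) (θ : ℝ) :
    Nrm r θ ^ r = |Real.cos θ| ^ r + |Real.sin θ| ^ r :=
  rpow_inv_key hr (S_pos hr θ).le

lemma Nrm_continuous {r : ℝ} (hr : 0 < r) : Continuous (Nrm r) := by
  have h1 : Continuous fun θ : ℝ => |Real.cos θ| ^ r :=
    (Real.continuous_cos.abs).rpow_const fun x => Or.inr hr.le
  have h2 : Continuous fun θ : ℝ => |Real.sin θ| ^ r :=
    (Real.continuous_sin.abs).rpow_const fun x => Or.inr hr.le
  exact (h1.add h2).rpow_const fun x => Or.inr (by positivity)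

lemma Pt_sphere {r : ℝ} (hr : 0 < r) (θ : ℝ) : lrNorm 2 r (Pt r θ) = 1 := by
  rw [lr2]
  have hN := Nrm_pos hr θ
  have e : |Real.cos θ / Nrm r θ| ^ r + |Real.sin θ / Nrm r θ| ^ r = 1 := by
    rw [abs_div, abs_div, abs_of_pos hN, Real.div_rpow (abs_nonneg _) hN.le,
      Real.div_rpow (abs_nonneg _) hN.le, ← add_div, Nrm_rpow hr, div_self (S_pos hr θ).ne']
  simp only [Pt, Matrix.cons_val_zero, Matrix.cons_val_one, Matrix.head_cons]
  rw [e, Real.one_rpow]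
lemma sphere_iff {r : ℝ} (hr : 0 < r) (x : Fin 2 → ℝ) :
    lrNorm 2 r x = 1 ↔ |x 0| ^ r + |x 1| ^ r = 1 := by
  rw [lr2]
  have hS : (0:ℝ) ≤ |x 0| ^ r + |x 1| ^ r := by positivity
  constructor
  · intro h
    have := rpow_inv_key hr hS
    rw [h, Real.one_rpow] at this; exact this.symm
  · intro h; rw [h, Real.one_rpow]

lemma Pt_surj {r : ℝ} (hr : 0 < r) {a : Fin 2 → ℝ} (ha : lrNorm 2 r a = 1) :
    ∃ θ, Pt r θ = a := by
  have hsum : |a 0| ^ r + |a 1| ^ r = 1 := (sphere_iff hr a).1 ha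
  set za : ℂ := ⟨a 0, a 1⟩ with hza
  have hz0 : za ≠ 0 := by
    intro h
    have h0 : a 0 = 0 := congrArg Complex.re h
    have h1 : a 1 = 0 := congrArg Complex.im h
    rw [h0, h1, abs_zero, Real.zero_rpow hr.ne'] at hsum
    norm_num at hsum
  set m : ℝ := ‖za‖ with hm
  have hm0 : 0 < m := norm_pos_iff.mpr hz0
  have hc : Real.cos (Complex.arg za) = a 0 / m := by
    rw [Complex.cos_arg hz0]
  have hs : Real.sin (Complex.arg za) = a 1 / m := by
    rw [Complex.sin_arg]
  refine ⟨Complex.arg za, ?_⟩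
  have hNeq : Nrm r (Complex.arg za) = 1 / m := by
    rw [Nrm, hc, hs, abs_div, abs_div, abs_of_pos hm0,
      Real.div_rpow (abs_nonneg _) hm0.le, Real.div_rpow (abs_nonneg _) hm0.le,
      ← add_div, hsum, Real.div_rpow (by norm_num) (Real.rpow_nonneg hm0.le r),
      Real.one_rpow, rpow_inv_key' hr hm0.le]
  funext i
  fin_cases i
  · show Real.cos (Complex.arg za) / Nrm r (Complex.arg za) = a 0
    rw [hc, hNeq]; field_simp
  · show Real.sin (Complex.arg za) / Nrm r (Complex.arg za) = a 1
    rw [hs, hNeq]; field_simp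

lemma dist_continuous {r : ℝ} (hr : 0 < r) (a : Fin 2 → ℝ) :
    Continuous fun θ => lrNorm 2 r (Pt r θ - a) := by
  have hrw : (fun θ => lrNorm 2 r (Pt r θ - a)) = fun θ =>
      ((|Real.cos θ / Nrm r θ - a 0| ^ r + |Real.sin θ / Nrm r θ - a 1| ^ r) ^ (1/r)) := by
    funext θ
    rw [lr2]
    simp [Pt]
  rw [hrw]
  have hN := Nrm_continuous hr
  have hc : Continuous fun θ : ℝ => |Real.cos θ / Nrm r θ - a 0| ^ r :=
    ((Real.continuous_cos.div hN fun θ => (Nrm_pos hr θ).ne').sub continuous_const).abs.rpow_const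
      fun x => Or.inr hr.le
  have hs : Continuous fun θ : ℝ => |Real.sin θ / Nrm r θ - a 1| ^ r :=
    ((Real.continuous_sin.div hN fun θ => (Nrm_pos hr θ).ne').sub continuous_const).abs.rpow_const
      fun x => Or.inr hr.le
  exact (hc.add hs).rpow_const fun x => Or.inr (by positivity)
lemma dist_le_iff {r : ℝ} (hr : 0 < r) (x : Fin 2 → ℝ) :
    lrNorm 2 r x ≤ 1 ↔ |x 0| ^ r + |x 1| ^ r ≤ 1 := by
  rw [lr2]
  have hS : (0:ℝ) ≤ |x 0| ^ r + |x 1| ^ r := by positivity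
  constructor
  · intro h
    have h2 := Real.rpow_le_rpow (Real.rpow_nonneg hS _) h hr.le
    rwa [rpow_inv_key hr hS, Real.one_rpow] at h2
  · intro h; exact Real.rpow_le_one (by positivity) h (by positivity)

lemma karamata {r : ℝ} (hr : 1 ≤ r) {s : ℝ} (hs : 0 ≤ s) (hs' : s ≤ 1/2) :
    (s + 1/2) ^ r + (1/2 : ℝ) ^ r ≤ 1 + s ^ r := by
  have h1s : (1:ℝ)/2 ≤ 1 - s := by linarith
  have h1s0 : (0:ℝ) < 1 - s := by linarith
  set L : ℝ := 1 / (2 * (1 - s)) with hLdef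
  have hL0 : 0 < L := by positivity
  have hL1 : L ≤ 1 := by
    rw [hLdef]; rw [div_le_one (by linarith)]; linarith
  have hLs : L * (1 - s) = 1/2 := by
    rw [hLdef]; field_simp
  have hf := convexOn_rpow hr
  have e1 : L * 1 + (1 - L) * s = s + 1/2 := by linear_combination hLs
  have e2 : (1 - L) * 1 + L * s = 1/2 := by linear_combination - hLs
  have m1 : (1:ℝ) ∈ Set.Ici (0:ℝ) := by norm_num
  have ms : s ∈ Set.Ici (0:ℝ) := hs
  have c1 := hf.2 m1 ms hL0.le (by linarith : (0:ℝ) ≤ 1 - L) (by ring)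
  have c2 := hf.2 m1 ms (by linarith : (0:ℝ) ≤ 1 - L) hL0.le (by ring)
  simp only [smul_eq_mul] at c1 c2
  rw [e1] at c1; rw [e2] at c2
  have o1 : (1:ℝ) ^ r = 1 := Real.one_rpow r
  rw [o1] at c1 c2
  linarith

lemma coord_strict {r : ℝ} (hr : 1 < r) {w t : ℝ} (ht : t ≠ 0) :
    2 * |w| ^ r < |w - t| ^ r + |w + t| ^ r := by
  have hr0 : (0:ℝ) < r := by linarith
  by_cases hw : w = 0
  · subst hw
    simp only [zero_sub, zero_add, abs_neg, abs_zero]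
    rw [Real.zero_rpow hr0.ne']
    have : (0:ℝ) < |t| ^ r := Real.rpow_pos_of_pos (abs_pos.2 ht) r
    linarith
  · set u := |w - t| with hu
    set v := |w + t| with hv
    have huv : u ≠ v := by
      intro h
      have : (w - t)^2 = (w + t)^2 := by
        rw [← sq_abs (w-t), ← sq_abs (w+t), ← hu, ← hv, h]
      have : w * t = 0 := by nlinarith
      rcases mul_eq_zero.1 this with h'|h' <;> [exact hw h'; exact ht h']
    have htri : 2 * |w| ≤ u + v := by
      have h' : |(w - t) + (w + t)| ≤ u + v := abs_add_le _ _
      have e : (w - t) + (w + t) = 2 * w := by ring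
      rw [e, abs_mul] at h'
      simpa using h'
    have hsc := (strictConvexOn_rpow hr).2 (Set.mem_Ici.2 (abs_nonneg _) : u ∈ Set.Ici (0:ℝ))
      (Set.mem_Ici.2 (abs_nonneg _) : v ∈ Set.Ici (0:ℝ)) huv
      (by norm_num : (0:ℝ) < 1/2) (by norm_num : (0:ℝ) < 1/2) (by norm_num)
    simp only [smul_eq_mul] at hsc
    have hmid : |w| ^ r ≤ (1/2 * u + 1/2 * v) ^ r :=
      Real.rpow_le_rpow (abs_nonneg _) (by linarith) hr0.le
    nlinarith [hsc, hmid]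

lemma coord_weak {r : ℝ} (hr : 1 < r) (w t : ℝ) :
    2 * |w| ^ r ≤ |w - t| ^ r + |w + t| ^ r := by
  by_cases ht : t = 0
  · subst ht; simp; ring_nf; simp
  · exact (coord_strict hr ht).le

lemma antipodal {r : ℝ} (hr : 1 < r) {z a : Fin 2 → ℝ} (hz : lrNorm 2 r z = 1)
    (ha : lrNorm 2 r a = 1) (h1 : lrNorm 2 r (z - a) ≤ 1) (h2 : lrNorm 2 r (-z - a) ≤ 1) :
    False := by
  have hr0 : (0:ℝ) < r := by linarith
  have hzs := (sphere_iff hr0 z).1 hz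
  have has := (sphere_iff hr0 a).1 ha
  have hd1 := (dist_le_iff hr0 _).1 h1
  have hd2 := (dist_le_iff hr0 _).1 h2
  simp only [Pi.sub_apply, Pi.neg_apply] at hd1 hd2
  have e0 : |-z 0 - a 0| = |z 0 + a 0| := by rw [show -z 0 - a 0 = -(z 0 + a 0) by ring, abs_neg]
  have e1 : |-z 1 - a 1| = |z 1 + a 1| := by rw [show -z 1 - a 1 = -(z 1 + a 1) by ring, abs_neg]
  rw [e0, e1] at hd2
  by_cases ha0 : a 0 = 0
  · by_cases ha1 : a 1 = 0
    · rw [ha0, ha1, abs_zero, Real.zero_rpow hr0.ne'] at has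
      norm_num at has
    · have hs1 := coord_strict hr (w := z 1) ha1
      have hw0 := coord_weak hr (z 0) (a 0)
      linarith
  · have hs0 := coord_strict hr (w := z 0) ha0
    have hw1 := coord_weak hr (z 1) (a 1)
    linarith

lemma lr_nonneg (r : ℝ) (x : Fin 2 → ℝ) : 0 ≤ lrNorm 2 r x := by
  rw [lr2]; positivity

lemma lr_neg (r : ℝ) (x : Fin 2 → ℝ) : lrNorm 2 r (-x) = lrNorm 2 r x := by
  rw [lr2, lr2]; simp

lemma lr_zero {r : ℝ} (hr : 0 < r) : lrNorm 2 r 0 = 0 := by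
  rw [lr2]
  simp only [Pi.zero_apply, abs_zero, Real.zero_rpow hr.ne', add_zero]
  rw [Real.zero_rpow (by positivity : 1/r ≠ 0)]

lemma no_two {r : ℝ} (hr : 1 < r) {a b : Fin 2 → ℝ} (ha : lrNorm 2 r a = 1)
    (hb : lrNorm 2 r b = 1)
    (hcov : ∀ x, lrNorm 2 r x = 1 → lrNorm 2 r (x - a) ≤ 1 ∨ lrNorm 2 r (x - b) ≤ 1) :
    False := by
  have hr0 : (0:ℝ) < r := by linarith
  obtain ⟨α, hα⟩ := Pt_surj hr0 ha
  obtain ⟨β, hβ⟩ := Pt_surj hr0 hb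
  set g : ℝ → ℝ := fun θ => lrNorm 2 r (Pt r θ - a) - lrNorm 2 r (Pt r θ - b) with hg
  have hgc : ContinuousOn g (Set.uIcc α β) :=
    ((dist_continuous hr0 a).sub (dist_continuous hr0 b)).continuousOn
  have hgα : g α ≤ 0 := by
    have : g α = 0 - lrNorm 2 r (a - b) := by rw [hg]; simp [hα, sub_self, lr_zero hr0]
    rw [this]
    have := lr_nonneg r (a - b)
    linarith
  have hgβ : 0 ≤ g β := by
    have : g β = lrNorm 2 r (b - a) - 0 := by rw [hg]; simp [hβ, sub_self, lr_zero hr0]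
    rw [this]
    have := lr_nonneg r (b - a)
    linarith
  have h0 : (0:ℝ) ∈ Set.uIcc (g α) (g β) := Set.mem_uIcc.2 (Or.inl ⟨hgα, hgβ⟩)
  obtain ⟨θ₀, _, hθ₀⟩ := intermediate_value_uIcc hgc h0
  set z := Pt r θ₀ with hz
  have hzS : lrNorm 2 r z = 1 := Pt_sphere hr0 θ₀
  have heq : lrNorm 2 r (z - a) = lrNorm 2 r (z - b) := by
    have : lrNorm 2 r (Pt r θ₀ - a) - lrNorm 2 r (Pt r θ₀ - b) = 0 := hθ₀
    rw [hz]; linarith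
  have hboth : lrNorm 2 r (z - a) ≤ 1 ∧ lrNorm 2 r (z - b) ≤ 1 := by
    rcases hcov z hzS with h | h
    · exact ⟨h, heq ▸ h⟩
    · exact ⟨heq ▸ h, h⟩
  have hnegz : lrNorm 2 r (-z) = 1 := by rw [lr_neg]; exact hzS
  rcases hcov (-z) hnegz with h | h
  · exact antipodal hr hzS ha hboth.1 h
  · exact antipodal hr hzS hb hboth.2 h
lemma rpow_superadd {r a b : ℝ} (hr : 1 ≤ r) (ha : 0 ≤ a) (hb : 0 ≤ b) :
    a ^ r + b ^ r ≤ (a + b) ^ r := by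
  have h := NNReal.add_rpow_le_rpow_add (Real.toNNReal a) (Real.toNNReal b) hr
  have h2 := NNReal.coe_le_coe.2 h
  push_cast [NNReal.coe_rpow] at h2
  rwa [Real.coe_toNNReal _ ha, Real.coe_toNNReal _ hb] at h2

noncomputable def uu (r : ℝ) : ℝ := (1 - (1/2 : ℝ) ^ r) ^ (1/r)

lemma half_le {r : ℝ} (hr : 1 ≤ r) : (1/2 : ℝ) ^ r ≤ 1/2 := by
  have := Real.rpow_le_rpow_of_exponent_ge (by norm_num : (0:ℝ) < 1/2) (by norm_num) hr
  rwa [Real.rpow_one] at this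

lemma half_pos' (r : ℝ) : (0:ℝ) < (1/2 : ℝ) ^ r := Real.rpow_pos_of_pos (by norm_num) r

lemma uu_rpow {r : ℝ} (hr : 1 < r) : uu r ^ r = 1 - (1/2 : ℝ) ^ r := by
  have h := half_le hr.le
  exact rpow_inv_key (by linarith) (by linarith)

lemma uu_nonneg {r : ℝ} (hr : 1 ≤ r) : 0 ≤ uu r := Real.rpow_nonneg (by nlinarith [half_le hr]) _

lemma uu_facts {r : ℝ} (hr : 1 < r) : 1/2 ≤ uu r ∧ uu r ≤ 1 := by
  have hr0 : (0:ℝ) < r := by linarith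
  have hc := half_le hr.le
  have hc0 := half_pos' r
  have h1 : ((1:ℝ)/2) ^ r ≤ uu r ^ r := by rw [uu_rpow hr]; linarith
  have h2 : uu r ^ r ≤ (1:ℝ) ^ r := by rw [uu_rpow hr, Real.one_rpow]; linarith
  exact ⟨(Real.rpow_le_rpow_iff (by norm_num) (uu_nonneg hr.le) hr0).1 h1,
    (Real.rpow_le_rpow_iff (uu_nonneg hr.le) (by norm_num) hr0).1 h2⟩

lemma abs_le_one_of_sphere {r : ℝ} (hr : 0 < r) {s t : ℝ} (h : |s| ^ r + |t| ^ r = 1) :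
    |t| ≤ 1 := by
  have h1 : |t| ^ r ≤ (1:ℝ) ^ r := by
    rw [Real.one_rpow]
    have : (0:ℝ) ≤ |s| ^ r := Real.rpow_nonneg (abs_nonneg _) r
    linarith
  exact (Real.rpow_le_rpow_iff (abs_nonneg _) (by norm_num) hr).1 h1

lemma cover_side {r : ℝ} (hr : 1 < r) {x0 x1 : ℝ} (hx : |x0| ^ r + |x1| ^ r = 1)
    (h0 : 0 ≤ x0) (h1 : x1 ≤ 1/2) : |x0 - uu r| ^ r + |x1 + 1/2| ^ r ≤ 1 := by
  have hr0 : (0:ℝ) < r := by linarith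
  set c := (1/2 : ℝ) ^ r with hc
  have hc0 := half_pos' r
  have hchalf := half_le hr.le
  have hx1le := abs_le_one_of_sphere hr0 hx
  have hx1lo : -1 ≤ x1 := by cases abs_cases x1 <;> linarith [abs_nonneg x1]
  have hu := uu_rpow hr
  have hu0 := uu_nonneg hr.le
  have ⟨huh, hu1⟩ := uu_facts hr
  rcases le_or_gt x1 (-(1/2)) with hA | hB
  · -- x1 ≤ -1/2
    have e1 : |x1 + 1/2| ≤ 1/2 := abs_le.2 ⟨by linarith, by linarith⟩
    have e1' : |x1 + 1/2| ^ r ≤ c := Real.rpow_le_rpow (abs_nonneg _) e1 hr0.le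
    have e2 : (1:ℝ)/2 ≤ |x1| := by rw [abs_of_nonpos (by linarith)]; linarith
    have e2' : c ≤ |x1| ^ r := Real.rpow_le_rpow (by norm_num) e2 hr0.le
    have e3 : |x0| ^ r ≤ uu r ^ r := by rw [hu]; linarith
    have e4 : x0 ≤ uu r := by
      have := (Real.rpow_le_rpow_iff (abs_nonneg _) hu0 hr0).1 e3
      cases abs_cases x0 <;> linarith
    have e5 : |x0 - uu r| ≤ uu r := abs_le.2 ⟨by linarith, by linarith⟩
    have e6 : |x0 - uu r| ^ r ≤ uu r ^ r := Real.rpow_le_rpow (abs_nonneg _) e5 hr0.le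
    rw [hu] at e6
    linarith
  · -- -1/2 < x1 ≤ 1/2
    have e2 : |x1| ≤ 1/2 := abs_le.2 ⟨by linarith, h1⟩
    have e2' : |x1| ^ r ≤ c := Real.rpow_le_rpow (abs_nonneg _) e2 hr0.le
    have e3 : uu r ^ r ≤ |x0| ^ r := by rw [hu]; linarith
    have e4 : uu r ≤ x0 := by
      have := (Real.rpow_le_rpow_iff hu0 (abs_nonneg _) hr0).1 e3
      rwa [abs_of_nonneg h0] at this
    have esup : (x0 - uu r) ^ r + uu r ^ r ≤ x0 ^ r := by
      have := rpow_superadd hr.le (by linarith : (0:ℝ) ≤ x0 - uu r) hu0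
      rwa [sub_add_cancel] at this
    have ex0 : |x0 - uu r| = x0 - uu r := abs_of_nonneg (by linarith)
    have ex0' : x0 ^ r = |x0| ^ r := by rw [abs_of_nonneg h0]
    -- suffices : |x1 + 1/2|^r ≤ |x1|^r + 1 - c
    have key : |x1 + 1/2| ^ r ≤ |x1| ^ r + 1 - c := by
      rcases le_or_gt 0 x1 with hp | hn
      · have := karamata hr.le hp h1
        rw [abs_of_nonneg (by linarith : (0:ℝ) ≤ x1 + 1/2), abs_of_nonneg hp]
        linarith
      · have e5 : |x1 + 1/2| ≤ 1/2 := abs_le.2 ⟨by linarith, by linarith⟩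
        have e5' : |x1 + 1/2| ^ r ≤ c := Real.rpow_le_rpow (abs_nonneg _) e5 hr0.le
        have : (0:ℝ) ≤ |x1| ^ r := Real.rpow_nonneg (abs_nonneg _) r
        linarith
    rw [hu] at esup
    rw [ex0]
    linarith
lemma cover3 {r : ℝ} (hr : 1 < r) :
    ∃ A : Fin 3 → Fin 2 → ℝ, (∀ i, lrNorm 2 r (A i) = 1) ∧
      ∀ x, lrNorm 2 r x = 1 → ∃ i, lrNorm 2 r (x - A i) ≤ 1 := by
  have hr0 : (0:ℝ) < r := by linarith
  have hc0 := half_pos' r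
  have hchalf := half_le hr.le
  have hu := uu_rpow hr
  have hu0 := uu_nonneg hr.le
  refine ⟨fun i => if i = 0 then ![0, 1] else if i = 1 then ![uu r, -(1/2)]
    else ![-(uu r), -(1/2)], ?_, ?_⟩
  · intro i
    fin_cases i
    · show lrNorm 2 r ![0, 1] = 1
      rw [sphere_iff hr0]
      simp only [Matrix.cons_val_zero, Matrix.cons_val_one, Matrix.head_cons, abs_zero, abs_one]
      rw [Real.zero_rpow hr0.ne', Real.one_rpow]; norm_num
    · show lrNorm 2 r ![uu r, -(1/2)] = 1
      rw [sphere_iff hr0]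
      simp only [Matrix.cons_val_zero, Matrix.cons_val_one, Matrix.head_cons, abs_neg]
      rw [abs_of_nonneg hu0, abs_of_nonneg (by norm_num : (0:ℝ) ≤ 1/2), hu]; ring
    · show lrNorm 2 r ![-(uu r), -(1/2)] = 1
      rw [sphere_iff hr0]
      simp only [Matrix.cons_val_zero, Matrix.cons_val_one, Matrix.head_cons, abs_neg]
      rw [abs_of_nonneg hu0, abs_of_nonneg (by norm_num : (0:ℝ) ≤ 1/2), hu]; ring
  · intro x hx
    have hsum := (sphere_iff hr0 x).1 hx
    have hx1 := abs_le_one_of_sphere hr0 hsum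
    rcases le_or_gt (1/2) (x 1) with h | h
    · refine ⟨0, ?_⟩
      show lrNorm 2 r (x - ![0, 1]) ≤ 1
      rw [dist_le_iff hr0]
      simp only [Pi.sub_apply, Matrix.cons_val_zero, Matrix.cons_val_one, Matrix.head_cons]
      rw [sub_zero]
      have hle1 : x 1 ≤ 1 := by cases abs_cases (x 1) <;> linarith
      have e1 : |x 1 - 1| = 1 - x 1 := by rw [abs_of_nonpos (by linarith)]; ring
      have e2 : (1 - x 1) ^ r ≤ |x 1| ^ r := by
        apply Real.rpow_le_rpow (by linarith)
        · rw [abs_of_nonneg (by linarith)]; linarith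
        · exact hr0.le
      rw [e1]; linarith
    · rcases le_or_gt 0 (x 0) with h0 | h0
      · refine ⟨1, ?_⟩
        show lrNorm 2 r (x - ![uu r, -(1/2)]) ≤ 1
        rw [dist_le_iff hr0]
        simp only [Pi.sub_apply, Matrix.cons_val_zero, Matrix.cons_val_one, Matrix.head_cons]
        rw [sub_neg_eq_add]
        exact cover_side hr hsum h0 h.le
      · refine ⟨2, ?_⟩
        show lrNorm 2 r (x - ![-(uu r), -(1/2)]) ≤ 1
        rw [dist_le_iff hr0]
        simp only [Pi.sub_apply, Matrix.cons_val_zero, Matrix.cons_val_one, Matrix.head_cons]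
        rw [sub_neg_eq_add, sub_neg_eq_add]
        have e0 : |x 0 + uu r| = |(-(x 0)) - uu r| := by
          rw [show (-(x 0)) - uu r = -(x 0 + uu r) by ring, abs_neg]
        have hx' : |(-(x 0))| ^ r + |x 1| ^ r = 1 := by rw [abs_neg]; exact hsum
        rw [e0]
        exact cover_side hr hx' (by linarith) h.le
lemma lr_one (x : Fin 2 → ℝ) : lrNorm 2 1 x = |x 0| + |x 1| := by
  rw [lr2]; norm_num [Real.rpow_one]

lemma e1_sphere {r : ℝ} (hr0 : 0 < r) : lrNorm 2 r ![1, 0] = 1 := by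
  rw [sphere_iff hr0]
  simp only [Matrix.cons_val_zero, Matrix.cons_val_one, Matrix.head_cons, abs_one, abs_zero]
  rw [Real.one_rpow, Real.zero_rpow hr0.ne']; norm_num

theorem stmt3 :
    coverNum 2 (lrNorm 2 1) = 2 ∧ ∀ r : ℝ, 1 < r → coverNum 2 (lrNorm 2 r) = 3 := by
  constructor
  · -- ℓ¹ case
    have h2mem : 2 ∈ {k : ℕ | ∃ a : Fin k → Fin 2 → ℝ, (∀ i, lrNorm 2 1 (a i) = 1) ∧
        ∀ x, lrNorm 2 1 x = 1 → ∃ i, lrNorm 2 1 (x - a i) ≤ 1} := by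
      refine ⟨fun i => if i = 0 then ![1/2, 1/2] else ![-(1/2), -(1/2)], ?_, ?_⟩
      · intro i
        fin_cases i
        · show lrNorm 2 1 ![1/2, 1/2] = 1
          rw [lr_one]
          simp only [Matrix.cons_val_zero, Matrix.cons_val_one, Matrix.head_cons]
          rw [abs_of_nonneg (by norm_num : (0:ℝ) ≤ 1/2)]
          norm_num
        · show lrNorm 2 1 ![-(1/2), -(1/2)] = 1
          rw [lr_one]
          simp only [Matrix.cons_val_zero, Matrix.cons_val_one, Matrix.head_cons, abs_neg]
          rw [abs_of_nonneg (by norm_num : (0:ℝ) ≤ 1/2)]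
          norm_num
      · intro x hx
        rw [lr_one] at hx
        rcases le_total 0 (x 0 + x 1) with h | h
        · refine ⟨0, ?_⟩
          show lrNorm 2 1 (x - ![1/2, 1/2]) ≤ 1
          rw [lr_one]
          simp only [Pi.sub_apply, Matrix.cons_val_zero, Matrix.cons_val_one, Matrix.head_cons]
          rcases abs_cases (x 0) with ⟨e1, _⟩ | ⟨e1, _⟩ <;>
            rcases abs_cases (x 1) with ⟨e2, _⟩ | ⟨e2, _⟩ <;>
            rcases abs_cases (x 0 - 1/2) with ⟨e3, _⟩ | ⟨e3, _⟩ <;>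
            rcases abs_cases (x 1 - 1/2) with ⟨e4, _⟩ | ⟨e4, _⟩ <;> linarith
        · refine ⟨1, ?_⟩
          show lrNorm 2 1 (x - ![-(1/2), -(1/2)]) ≤ 1
          rw [lr_one]
          simp only [Pi.sub_apply, Matrix.cons_val_zero, Matrix.cons_val_one, Matrix.head_cons]
          rcases abs_cases (x 0) with ⟨e1, _⟩ | ⟨e1, _⟩ <;>
            rcases abs_cases (x 1) with ⟨e2, _⟩ | ⟨e2, _⟩ <;>
            rcases abs_cases (x 0 - -(1/2)) with ⟨e3, _⟩ | ⟨e3, _⟩ <;>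
            rcases abs_cases (x 1 - -(1/2)) with ⟨e4, _⟩ | ⟨e4, _⟩ <;> linarith
    refine le_antisymm (Nat.sInf_le h2mem) (le_csInf ⟨2, h2mem⟩ ?_)
    rintro k ⟨a, ha, hcov⟩
    by_contra hcon
    push_neg at hcon
    interval_cases k
    · have he1 : lrNorm 2 1 ![1, 0] = 1 := e1_sphere one_pos
      obtain ⟨i, -⟩ := hcov _ he1
      exact i.elim0
    · have ha0 := ha 0
      rw [lr_one] at ha0
      have hx : lrNorm 2 1 (-(a 0)) = 1 := by rw [lr_neg]; exact ha 0
      obtain ⟨i, hi⟩ := hcov _ hx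
      have hi0 : i = 0 := Fin.eq_zero i
      rw [hi0, lr_one] at hi
      simp only [Pi.sub_apply, Pi.neg_apply] at hi
      rcases abs_cases (a 0 0) with ⟨e1, _⟩ | ⟨e1, _⟩ <;>
        rcases abs_cases (a 0 1) with ⟨e2, _⟩ | ⟨e2, _⟩ <;>
        rcases abs_cases (-a 0 0 - a 0 0) with ⟨e3, _⟩ | ⟨e3, _⟩ <;>
        rcases abs_cases (-a 0 1 - a 0 1) with ⟨e4, _⟩ | ⟨e4, _⟩ <;> linarith
  · -- ℓ^r case
    intro r hr
    have hr0 : (0:ℝ) < r := by linarith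
    have h3mem : 3 ∈ {k : ℕ | ∃ a : Fin k → Fin 2 → ℝ, (∀ i, lrNorm 2 r (a i) = 1) ∧
        ∀ x, lrNorm 2 r x = 1 → ∃ i, lrNorm 2 r (x - a i) ≤ 1} := by
      obtain ⟨A, h1, h2⟩ := cover3 hr
      exact ⟨A, h1, h2⟩
    refine le_antisymm (Nat.sInf_le h3mem) (le_csInf ⟨3, h3mem⟩ ?_)
    rintro k ⟨a, ha, hcov⟩
    by_contra hcon
    push_neg at hcon
    interval_cases k
    · obtain ⟨i, -⟩ := hcov _ (e1_sphere hr0)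
      exact i.elim0
    · exact no_two hr (ha 0) (ha 0) fun x hx => by
        obtain ⟨i, hi⟩ := hcov x hx
        rw [Fin.eq_zero i] at hi
        exact Or.inl hi
    · exact no_two hr (ha 0) (ha 1) fun x hx => by
        obtain ⟨i, hi⟩ := hcov x hx
        fin_cases i
        · exact Or.inl hi
        · exact Or.inr hi
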